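/- arXiv:2501.16723 — 2 statements merged into one kernel-verified Lean document; each statement's English description precedes it below -/
import Mathlib

section
/- Let x ≥ 2, z ≥ 2, θ ∈ (0,1), λ > 0, and set y = x^θ. Let B be a finite set of integers b with 1 < b ≤ x such that every prime factor of every b ∈ B is at least z. For a prime p write #B_p = #{ b ∈ B : p | b } and w_p = 1 − log p/log y. Then #B − λ · ∑_{z ≤ p ≤ y} w_p · #B_p ≤ (1 + λ/θ) · #{ b ∈ B : ω(b) < 1/λ + 1/θ }, where the sum runs over primes p and ω(b) is the number of distinct prime factors of b. -/
open Filter Real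

/-- the weighted-sieve reduction. Let `x ≥ 2`, `z ≥ 2`, `θ ∈ (0,1)`,
`λ > 0` and `y = x^θ`. If `B` is a finite set of integers `b` with `1 < b ≤ x` all of
whose prime factors are at least `z`, then
`#B − λ ∑_{z ≤ p ≤ y} (1 − log p/log y) #B_p ≤ (1 + λ/θ) #{b ∈ B : ω(b) < 1/λ + 1/θ}`. -/
theorem weighted_sieve_reduction (x z θ lam : ℝ) (hx : 2 ≤ x) (hz : 2 ≤ z)
    (hθ : θ ∈ Set.Ioo (0 : ℝ) 1) (hlam : 0 < lam)
    (B : Finset ℕ) (hB : ∀ b ∈ B, 1 < b ∧ (b : ℝ) ≤ x)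
    (hBz : ∀ b ∈ B, ∀ p ∈ Nat.primeFactors b, z ≤ (p : ℝ)) :
    (B.card : ℝ) -
        lam * ∑ p ∈ ((Finset.range (Nat.floor (x ^ θ) + 1)).filter fun p : ℕ =>
            p.Prime ∧ z ≤ (p : ℝ) ∧ (p : ℝ) ≤ x ^ θ),
          (1 - Real.log p / Real.log (x ^ θ)) * ((B.filter fun b : ℕ => p ∣ b).card : ℝ) ≤
      (1 + lam / θ) *
        ((B.filter fun b : ℕ => (b.primeFactors.card : ℝ) < 1 / lam + 1 / θ).card : ℝ) := by
  obtain ⟨hθ0, hθ1⟩ := hθ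
  have hx0 : (0:ℝ) < x := by linarith
  have hlogx : 0 < Real.log x := Real.log_pos (by linarith)
  have hlogy : Real.log (x ^ θ) = θ * Real.log x := Real.log_rpow hx0 θ
  have hlogy0 : 0 < Real.log (x ^ θ) := by rw [hlogy]; positivity
  set y := x ^ θ with hy
  set P := (Finset.range (Nat.floor y + 1)).filter
      (fun p : ℕ => p.Prime ∧ z ≤ (p : ℝ) ∧ (p : ℝ) ≤ y) with hPdef
  -- swap the double sum
  have hswap : ∑ p ∈ P, (1 - Real.log p / Real.log y) * ((B.filter fun b : ℕ => p ∣ b).card : ℝ)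
      = ∑ b ∈ B, ∑ p ∈ P.filter (fun p => p ∣ b), (1 - Real.log p / Real.log y) := by
    calc ∑ p ∈ P, (1 - Real.log p / Real.log y) * ((B.filter fun b : ℕ => p ∣ b).card : ℝ)
        = ∑ p ∈ P, ∑ b ∈ B, (if p ∣ b then (1 - Real.log p / Real.log y) else 0) := by
          refine Finset.sum_congr rfl fun p _ => ?_
          rw [← Finset.sum_filter, Finset.sum_const, nsmul_eq_mul, mul_comm]
      _ = ∑ b ∈ B, ∑ p ∈ P, (if p ∣ b then (1 - Real.log p / Real.log y) else 0) :=
          Finset.sum_comm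
      _ = _ := Finset.sum_congr rfl fun b _ => (Finset.sum_filter _ _).symm
  -- key pointwise bound
  have key : ∀ b ∈ B, (b.primeFactors.card : ℝ) - 1/θ
      ≤ ∑ p ∈ P.filter (fun p => p ∣ b), (1 - Real.log p / Real.log y) := by
    intro b hb
    obtain ⟨hb1, hbx⟩ := hB b hb
    have hb0 : b ≠ 0 := by omega
    have hPb : P.filter (fun p => p ∣ b) = b.primeFactors.filter (fun p : ℕ => (p:ℝ) ≤ y) := by
      ext p
      simp only [hPdef, Finset.mem_filter, Finset.mem_range, Nat.mem_primeFactors]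
      constructor
      · rintro ⟨⟨hr, hp, hzp, hpy⟩, hpb⟩
        exact ⟨⟨hp, hpb, hb0⟩, hpy⟩
      · rintro ⟨⟨hp, hpb, -⟩, hpy⟩
        refine ⟨⟨?_, hp, hBz b hb p (Nat.mem_primeFactors.mpr ⟨hp, hpb, hb0⟩), hpy⟩, hpb⟩
        have := Nat.le_floor hpy
        omega
    rw [hPb]
    have hdrop : ∑ p ∈ b.primeFactors, (1 - Real.log p / Real.log y)
        ≤ ∑ p ∈ b.primeFactors.filter (fun p : ℕ => (p:ℝ) ≤ y), (1 - Real.log p / Real.log y) := by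
      rw [← Finset.sum_filter_add_sum_filter_not b.primeFactors (fun p : ℕ => (p:ℝ) ≤ y)]
      have hneg : ∑ p ∈ b.primeFactors.filter (fun p : ℕ => ¬ (p:ℝ) ≤ y),
          (1 - Real.log p / Real.log y) ≤ 0 := by
        apply Finset.sum_nonpos
        intro p hp
        simp only [Finset.mem_filter, not_le] at hp
        have h1 : Real.log y ≤ Real.log p := Real.log_le_log (by positivity) hp.2.le
        have h2 : (1:ℝ) ≤ Real.log p / Real.log y := (one_le_div hlogy0).mpr h1
        linarith
      linarith
    have hsum : ∑ p ∈ b.primeFactors, (1 - Real.log p / Real.log y)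
        = (b.primeFactors.card : ℝ) - (∑ p ∈ b.primeFactors, Real.log p) / Real.log y := by
      rw [Finset.sum_sub_distrib, Finset.sum_const, nsmul_eq_mul, mul_one, ← Finset.sum_div]
    have hlogb : ∑ p ∈ b.primeFactors, Real.log p ≤ Real.log b := by
      have hdvd : (∏ p ∈ b.primeFactors, p) ∣ b := Nat.prod_primeFactors_dvd b
      have hle : (∏ p ∈ b.primeFactors, (p:ℝ)) ≤ (b:ℝ) := by
        have h := (Nat.cast_le (α := ℝ)).mpr (Nat.le_of_dvd (Nat.pos_of_ne_zero hb0) hdvd)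
        rwa [Nat.cast_prod] at h
      have hpos : (0:ℝ) < ∏ p ∈ b.primeFactors, (p:ℝ) :=
        Finset.prod_pos fun p hp => by exact_mod_cast (Nat.prime_of_mem_primeFactors hp).pos
      calc ∑ p ∈ b.primeFactors, Real.log p
          = Real.log (∏ p ∈ b.primeFactors, (p:ℝ)) :=
            (Real.log_prod fun p hp => by
              exact_mod_cast (Nat.prime_of_mem_primeFactors hp).ne_zero).symm
        _ ≤ Real.log b := Real.log_le_log hpos hle
    have hlbx : Real.log b ≤ Real.log x := Real.log_le_log (by positivity) hbx
    have h1θ : Real.log x / Real.log y = 1/θ := by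
      rw [hlogy]; field_simp
    have hfrac : (∑ p ∈ b.primeFactors, Real.log p) / Real.log y ≤ 1/θ := by
      rw [← h1θ]
      gcongr
      linarith
    linarith [hdrop, hsum.ge]
  rw [hswap]
  have hrw : (B.card : ℝ) - lam * ∑ b ∈ B, ∑ p ∈ P.filter (fun p => p ∣ b),
        (1 - Real.log p / Real.log y)
      = ∑ b ∈ B, ((1:ℝ) - lam * ∑ p ∈ P.filter (fun p => p ∣ b),
        (1 - Real.log p / Real.log y)) := by
    rw [Finset.sum_sub_distrib, Finset.sum_const, nsmul_eq_mul, mul_one, Finset.mul_sum]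
  rw [hrw]
  have h2 : ∑ b ∈ B, ((1:ℝ) - lam * ∑ p ∈ P.filter (fun p => p ∣ b),
        (1 - Real.log p / Real.log y))
      ≤ ∑ b ∈ B, (1 + lam/θ - lam * (b.primeFactors.card : ℝ)) := by
    refine Finset.sum_le_sum fun b hb => ?_
    have hk := key b hb
    have := mul_le_mul_of_nonneg_left hk hlam.le
    have hd : lam * (1/θ) = lam/θ := by ring
    nlinarith
  refine h2.trans ?_
  rw [← Finset.sum_filter_add_sum_filter_not B
      (fun b => (b.primeFactors.card : ℝ) < 1/lam + 1/θ)]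
  have hA : ∑ b ∈ B.filter (fun b => (b.primeFactors.card : ℝ) < 1/lam + 1/θ),
      (1 + lam/θ - lam * (b.primeFactors.card : ℝ))
      ≤ (1 + lam/θ) * ((B.filter fun b : ℕ =>
        (b.primeFactors.card : ℝ) < 1/lam + 1/θ).card : ℝ) := by
    calc ∑ b ∈ B.filter (fun b => (b.primeFactors.card : ℝ) < 1/lam + 1/θ),
        (1 + lam/θ - lam * (b.primeFactors.card : ℝ))
        ≤ ∑ _b ∈ B.filter (fun b => (b.primeFactors.card : ℝ) < 1/lam + 1/θ), (1 + lam/θ) := by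
          refine Finset.sum_le_sum fun b _ => ?_
          have hc : (0:ℝ) ≤ (b.primeFactors.card : ℝ) := Nat.cast_nonneg _
          nlinarith
      _ = (1 + lam/θ) * _ := by rw [Finset.sum_const, nsmul_eq_mul, mul_comm]
  have hC : ∑ b ∈ B.filter (fun b => ¬ (b.primeFactors.card : ℝ) < 1/lam + 1/θ),
      (1 + lam/θ - lam * (b.primeFactors.card : ℝ)) ≤ 0 := by
    refine Finset.sum_nonpos fun b hb => ?_
    simp only [Finset.mem_filter, not_lt] at hb
    have := mul_le_mul_of_nonneg_left hb.2 hlam.le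
    have heq : lam * (1/lam + 1/θ) = 1 + lam/θ := by field_simp
    linarith
  linarith
end

section
/- Let x ≥ 3 and 1/4 < θ₁ ≤ 1/2. Let p₁ be a prime with x^{θ₁} < p₁ ≤ x^{1/2} and p₁ ≡ 3 (mod 4). Suppose p is a prime with p ≤ x, p ≡ 3 (mod 8), p₁ | (p − 1), and p − 1 has no prime factor q < p₁ with q ≡ 3 (mod 4). Then there exist a positive integer m and a prime p₂ such that p − 1 = 2·m·p₁·p₂, every prime factor of m is congruent to 1 (mod 4), p₂ ≡ 3 (mod 4), and p₂ ≥ p₁. -/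
lemma aux_filter_prod (p : ℕ → Bool) (l : List ℕ) :
    (l.filter p).prod * (l.filter (fun a => !p a)).prod = l.prod := by
  induction l with
  | nil => simp
  | cons a t ih =>
    by_cases h : p a = true <;> simp [List.filter_cons, h, ← ih] <;> ring

lemma aux_prod_mod (l : List ℕ) (h : ∀ a ∈ l, a % 2 = 1) :
    l.prod % 4 = 3 ^ (l.filter (fun a => a % 4 = 3)).length % 4 := by
  induction l with
  | nil => simp
  | cons a t ih =>
    have ha := h a List.mem_cons_self
    have ih' := ih (fun b hb => h b (List.mem_cons_of_mem a hb))
    by_cases h4 : a % 4 = 3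
    · rw [List.prod_cons, List.filter_cons, if_pos (by simpa using h4), List.length_cons,
        pow_succ, Nat.mul_mod, h4, ih', Nat.mul_mod (3 ^ _) 3]
      norm_num [mul_comm]
    · have h1 : a % 4 = 1 := by omega
      rw [List.prod_cons, List.filter_cons, if_neg (by simpa using h4),
        Nat.mul_mod, h1, one_mul, Nat.mod_mod_of_dvd _ (by norm_num), ih']


/-- the switching / factorization step. Let `x ≥ 3`,
`1/4 < θ₁ ≤ 1/2`, let `p₁` be a prime with `x^{θ₁} < p₁ ≤ x^{1/2}` and
`p₁ ≡ 3 (mod 4)`, and let `p ≤ x` be a prime with `p ≡ 3 (mod 8)`, `p₁ | p − 1`, such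
that `p − 1` has no prime factor `q < p₁` with `q ≡ 3 (mod 4)`. Then
`p − 1 = 2·m·p₁·p₂` where all prime factors of `m` are `≡ 1 (mod 4)`, `p₂` is a prime
with `p₂ ≡ 3 (mod 4)` and `p₂ ≥ p₁`. -/
theorem switching_factorization (x : ℝ) (hx : 3 ≤ x) (θ₁ : ℝ)
    (hθ₁ : 1 / 4 < θ₁) (hθ₁' : θ₁ ≤ 1 / 2)
    (p₁ : ℕ) (hp₁ : p₁.Prime) (hp₁l : x ^ θ₁ < (p₁ : ℝ))
    (hp₁u : (p₁ : ℝ) ≤ x ^ ((1 : ℝ) / 2)) (hp₁mod : p₁ % 4 = 3)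
    (p : ℕ) (hp : p.Prime) (hpx : (p : ℝ) ≤ x) (hpmod : p % 8 = 3)
    (hdvd : p₁ ∣ p - 1)
    (hsift : ∀ q : ℕ, q.Prime → q ∣ p - 1 → q < p₁ → q % 4 ≠ 3) :
    ∃ m p₂ : ℕ, 0 < m ∧ p₂.Prime ∧ p - 1 = 2 * m * p₁ * p₂ ∧
      (∀ q : ℕ, q.Prime → q ∣ m → q % 4 = 1) ∧ p₂ % 4 = 3 ∧ p₁ ≤ p₂ := by
  have hp3 : 3 ≤ p := by omega
  set n : ℕ := (p - 1) / 2 with hn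
  have hpn : p - 1 = 2 * n := by omega
  have hn4 : n % 4 = 1 := by omega
  have hn0 : n ≠ 0 := by omega
  have hnodd : n % 2 = 1 := by omega
  set L : List ℕ := n.primeFactorsList with hLdef
  have hprodL : L.prod = n := Nat.prod_primeFactorsList hn0
  have hLmem : ∀ a ∈ L, a.Prime ∧ a ∣ n := fun a ha =>
    ⟨Nat.prime_of_mem_primeFactorsList ha, Nat.dvd_of_mem_primeFactorsList ha⟩
  have hodd : ∀ a ∈ L, a % 2 = 1 := by
    intro a ha
    obtain ⟨hap, had⟩ := hLmem a ha
    have h2 := hap.two_le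
    by_contra h
    have h2a : 2 ∣ a := by omega
    have : 2 ∣ n := h2a.trans had
    omega
  -- p₁ divides n
  have hp₁3 : 3 ≤ p₁ := by have := hp₁.two_le; omega
  have hcop : Nat.Coprime p₁ 2 := (hp₁.coprime_iff_not_dvd).2
    (fun h => by have := Nat.le_of_dvd (by norm_num) h; omega)
  have hnd : n ∣ p - 1 := ⟨2, by omega⟩
  have hdvdn : p₁ ∣ n := hcop.dvd_of_dvd_mul_left (by rwa [← hpn])
  set F : List ℕ := L.filter (fun a => a % 4 = 3) with hFdef
  set k : ℕ := F.length with hkdef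
  -- every element of F is ≥ p₁
  have hFmem : ∀ a ∈ F, a.Prime ∧ a % 4 = 3 ∧ a ∣ n ∧ p₁ ≤ a := by
    intro a ha
    rw [List.mem_filter] at ha
    obtain ⟨haL, ha3⟩ := ha
    have ha3 : a % 4 = 3 := by simpa using ha3
    obtain ⟨hap, had⟩ := hLmem a haL
    refine ⟨hap, ha3, had, ?_⟩
    by_contra h
    exact hsift a hap (had.trans hnd) (by omega) ha3
  -- k is even
  have hmod : 3 ^ k % 4 = 1 := by
    have h := aux_prod_mod L hodd
    rw [hprodL, hn4] at h
    exact h.symm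
  have hkeven : k % 2 = 0 := by
    by_contra h
    have hk1 : k % 2 = 1 := by omega
    have : 3 ^ k % 4 = 3 := by
      conv_lhs => rw [← Nat.div_add_mod k 2]
      rw [pow_add, pow_mul, Nat.mul_mod, Nat.pow_mod, hk1]
      norm_num
    omega
  -- p₁ ∈ F, so k ≥ 1
  have hp₁L : p₁ ∈ L := by
    rw [hLdef, Nat.mem_primeFactorsList hn0]
    exact ⟨hp₁, hdvdn⟩
  have hp₁F : p₁ ∈ F := by
    rw [hFdef, List.mem_filter]
    exact ⟨hp₁L, by simpa using hp₁mod⟩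
  have hk1 : 1 ≤ k := List.length_pos_iff.2 (List.ne_nil_of_mem hp₁F)
  -- F.prod divides n
  have hsplit : F.prod * (L.filter (fun a => !decide (a % 4 = 3))).prod = n := by
    rw [hFdef, aux_filter_prod, hprodL]
  have hFdvd : F.prod ∣ n := ⟨_, hsplit.symm⟩
  -- n < p₁ ^ 4
  have hx1 : (1 : ℝ) < x := by linarith
  have hnlt : n < p₁ ^ 4 := by
    have h1 : (n : ℝ) ≤ x := by
      have : (n : ℝ) ≤ (p : ℝ) := by exact_mod_cast Nat.le_of_lt (by omega)
      linarith
    have h2 : x ≤ x ^ (4 * θ₁) := by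
      nth_rewrite 1 [← Real.rpow_one x]
      exact Real.rpow_le_rpow_of_exponent_le (le_of_lt hx1) (by linarith)
    have h3 : x ^ (4 * θ₁) = (x ^ θ₁) ^ (4 : ℕ) := by
      rw [← Real.rpow_natCast (x ^ θ₁) 4, ← Real.rpow_mul (by linarith)]
      norm_num [mul_comm]
    have h4 : (x ^ θ₁) ^ (4 : ℕ) < (p₁ : ℝ) ^ (4 : ℕ) :=
      pow_lt_pow_left₀ hp₁l (Real.rpow_nonneg (by linarith) _) (by norm_num)
    have : (n : ℝ) < ((p₁ : ℕ) : ℝ) ^ (4 : ℕ) := by linarith [h3 ▸ h2]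
    exact_mod_cast (by push_cast at this ⊢; linarith [this] : (n : ℝ) < ((p₁ ^ 4 : ℕ) : ℝ))
  -- k < 4
  have hk4 : k < 4 := by
    have h1 : p₁ ^ k ≤ F.prod :=
      List.pow_card_le_prod F p₁ (fun a ha => (hFmem a ha).2.2.2)
    have h2 : F.prod ≤ n := Nat.le_of_dvd (Nat.pos_of_ne_zero hn0) hFdvd
    have : p₁ ^ k < p₁ ^ 4 := by omega
    exact (Nat.pow_lt_pow_iff_right hp₁.one_lt).1 this
  have hk2 : k = 2 := by omega
  -- F is a pair containing p₁
  obtain ⟨a, b, hFab⟩ := List.length_eq_two.1 hk2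
  have hp₁ab : p₁ = a ∨ p₁ = b := by
    rw [hFab] at hp₁F; simpa using hp₁F
  obtain ⟨p₂, hprodF, hp₂F⟩ : ∃ p₂, F.prod = p₁ * p₂ ∧ p₂ ∈ F := by
    rcases hp₁ab with h | h
    · exact ⟨b, by rw [hFab, ← h]; simp, by rw [hFab]; simp⟩
    · exact ⟨a, by rw [hFab, ← h]; simp [mul_comm], by rw [hFab]; simp⟩
  obtain ⟨hp₂p, hp₂3, hp₂n, hp₂ge⟩ := hFmem p₂ hp₂F
  set m : ℕ := (L.filter (fun a => !decide (a % 4 = 3))).prod with hmdef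
  have hm0 : 0 < m := by
    apply List.prod_pos
    intro a ha
    exact (hLmem a (List.mem_filter.1 ha).1).1.pos
  refine ⟨m, p₂, hm0, hp₂p, ?_, ?_, hp₂3, hp₂ge⟩
  · rw [hpn, ← hsplit, hprodF]; ring
  · intro q hq hqm
    obtain ⟨a, ha, hqa⟩ := (hq.prime.dvd_prod_iff).1 hqm
    rw [List.mem_filter] at ha
    obtain ⟨haL, hnot3⟩ := ha
    have hnot3 : ¬ (a % 4 = 3) := by simpa using hnot3
    have haodd := hodd a haL
    have : q = a := ((Nat.prime_dvd_prime_iff_eq hq (hLmem a haL).1).1 hqa)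
    omega
end
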